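/- Let k be a field, A a bialgebra over k, X = {1, …, n}, and let g, f : X × X → X be maps written g_i(j) and f_j(i). Let q_{ij} ∈ k^× for i, j ∈ X, and let t_{ij} ∈ A satisfy Δ(t_{ij}) = Σ_{k∈X} t_{ik} ⊗ t_{kj} for all i, j. Let r : A × A → k be a k-bilinear map satisfying (CQT1) r(ab, c) = Σ r(a, c_(1)) r(b, c_(2)) for all a, b, c ∈ A, and whose values on the generators are r(t_{ik}, t_{jℓ}) = q_{ji} δ_{k, g_j(i)} δ_{ℓ, f_i(j)}. Fix N ≥ 1 and j_1, …, j_N ∈ X, fix scalars α : X^N → k, and set D := Σ_{(i_1, …, i_N) ∈ X^N} α(i_1, …, i_N) t_{j_1 i_1} ⋯ t_{j_N i_N}. For a, b ∈ X define recursively a_0 := a and a_s := f_{j_s}(a_{s−1}) for 1 ≤ s ≤ N. Then r(D, t_{ab}) = δ_{b, a_N} · α(g_{a_0}(j_1), g_{a_1}(j_2), …, g_{a_{N−1}}(j_N)) · q_{a_0 j_1} q_{a_1 j_2} ⋯ q_{a_{N−1} j_N}. -/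

import Mathlib

open scoped TensorProduct

/-- Chain of applications of `f`: the final state. -/
def fch {n : ℕ} (f : Fin n → Fin n → Fin n) : Fin n → List (Fin n) → Fin n
  | a, [] => a
  | a, j :: js => fch f (f j a) js

/-- Chain of `g`-values along the `f`-orbit. -/
def gch {n : ℕ} (g f : Fin n → Fin n → Fin n) : Fin n → List (Fin n) → List (Fin n)
  | _, [] => []
  | a, j :: js => g a j :: gch g f (f j a) js

/-- Product of cocycle values along the `f`-orbit. -/
def qpr {k : Type*} [Field k] {n : ℕ} (q : Fin n → Fin n → k)
    (f : Fin n → Fin n → Fin n) : Fin n → List (Fin n) → k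
  | _, [] => 1
  | a, j :: js => q a j * qpr q f (f j a) js

lemma fch_append {n : ℕ} (f : Fin n → Fin n → Fin n) (a : Fin n) (l₁ l₂ : List (Fin n)) :
    fch f a (l₁ ++ l₂) = fch f (fch f a l₁) l₂ := by
  induction l₁ generalizing a with
  | nil => rfl
  | cons j js ih => simp [fch, ih]

lemma fch_take_succ {n : ℕ} (f : Fin n → Fin n → Fin n) {M : ℕ}
    (v : Fin (M + 1) → Fin n) (a : Fin n) (s : ℕ) :
    fch f (f (v 0) a) ((List.ofFn fun i => v i.succ).take s) =
      fch f a ((List.ofFn v).take (s + 1)) := by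
  rw [List.ofFn_succ, List.take_succ_cons]
  rfl

lemma gch_ofFn {n : ℕ} (g f : Fin n → Fin n → Fin n) :
    ∀ (M : ℕ) (v : Fin M → Fin n) (a : Fin n),
      gch g f a (List.ofFn v) =
        List.ofFn (fun s : Fin M => g (fch f a ((List.ofFn v).take s.1)) (v s)) := by
  intro M
  induction M with
  | zero => intro v a; rfl
  | succ M ih =>
    intro v a
    conv_lhs => rw [List.ofFn_succ]
    conv_rhs => rw [List.ofFn_succ]
    simp only [gch]
    refine List.cons_eq_cons.mpr ⟨by simp [fch], ?_⟩
    rw [ih (fun i => v i.succ) (f (v 0) a)]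
    exact congrArg List.ofFn (funext fun s => by
      simp only [Fin.val_succ]
      rw [← fch_take_succ f v a s.1])

lemma qpr_ofFn {k : Type*} [Field k] {n : ℕ} (q : Fin n → Fin n → k)
    (f : Fin n → Fin n → Fin n) :
    ∀ (M : ℕ) (v : Fin M → Fin n) (a : Fin n),
      qpr q f a (List.ofFn v) =
        ∏ s : Fin M, q (fch f a ((List.ofFn v).take s.1)) (v s) := by
  intro M
  induction M with
  | zero => intro v a; simp [List.ofFn_zero, qpr]
  | succ M ih =>
    intro v a
    rw [Fin.prod_univ_succ]
    conv_lhs => rw [List.ofFn_succ]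
    simp only [qpr]
    have h0 : q a (v 0) = q (fch f a ((List.ofFn v).take (0 : Fin (M+1)).1)) (v 0) := by
      simp [fch]
    rw [h0, ih (fun i => v i.succ) (f (v 0) a)]
    congr 1
    exact Finset.prod_congr rfl fun s _ => by
      simp only [Fin.val_succ]
      rw [← fch_take_succ f v a s.1]

theorem r_quantum_determinant_set_theoretical
    {k : Type*} [Field k] {A : Type*} [Ring A] [Bialgebra k A]
    (n : ℕ) (g f : Fin n → Fin n → Fin n)
    (q : Fin n → Fin n → k) (hq : ∀ i j, q i j ≠ 0)
    (t : Fin n → Fin n → A)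
    (hcomul : ∀ i j, Coalgebra.comul (R := k) (t i j) = ∑ m, t i m ⊗ₜ[k] t m j)
    (r : A →ₗ[k] A →ₗ[k] k)
    (hCQT1 : ∀ (a b c : A) (ι : Type*) (rc : Coalgebra.Repr k c ι),
      r (a * b) c = ∑ i ∈ rc.index, r a (rc.left i) * r b (rc.right i))
    (hrt : ∀ i c j l, r (t i c) (t j l) =
      if c = g j i ∧ l = f i j then q j i else 0)
    (N : ℕ) (hN : 1 ≤ N) (jseq : Fin N → Fin n)
    (α : (Fin N → Fin n) → k) (D : A)
    (hD : D = ∑ iseq : Fin N → Fin n,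
      α iseq • (List.ofFn fun s => t (jseq s) (iseq s)).prod)
    (aseq : Fin n → ℕ → Fin n)
    (ha0 : ∀ a, aseq a 0 = a)
    (haS : ∀ (a : Fin n) (s : Fin N), aseq a (s.1 + 1) = f (jseq s) (aseq a s.1)) :
    ∀ a b : Fin n,
      r D (t a b) =
        (if b = aseq a N then (1 : k) else 0) *
          (α (fun s => g (aseq a s.1) (jseq s)) *
            ∏ s : Fin N, q (aseq a s.1) (jseq s)) := by
  -- step lemma
  have step : ∀ (jj ii aa bb : Fin n) (P : A),
      r (t jj ii * P) (t aa bb) =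
        if ii = g aa jj then q aa jj * r P (t (f jj aa) bb) else 0 := by
    intro jj ii aa bb P
    rw [hCQT1 (t jj ii) P (t aa bb) (ULift (Fin n))
      { index := (Finset.univ : Finset (ULift (Fin n))),
        left := fun m => t aa m.down, right := fun m => t m.down bb,
        eq := (Fintype.sum_equiv (Equiv.ulift (α := Fin n))
          (fun m => t aa m.down ⊗ₜ[k] t m.down bb)
          (fun m => t aa m ⊗ₜ[k] t m bb) (fun _ => rfl)).trans
          (hcomul aa bb).symm }]
    show (∑ i : ULift (Fin n),
        (r (t jj ii)) (t aa i.down) * (r P) (t i.down bb)) = _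
    rw [show (∑ i : ULift (Fin n),
        (r (t jj ii)) (t aa i.down) * (r P) (t i.down bb)) =
        ∑ m : Fin n, (r (t jj ii)) (t aa m) * (r P) (t m bb) from
      Fintype.sum_equiv (Equiv.ulift (α := Fin n)) _ _ (fun _ => rfl)]
    simp only [hrt]
    by_cases h : ii = g aa jj
    · simp [h, ite_mul, Finset.sum_ite_eq', Finset.sum_ite_eq]
    · simp [h]
  -- the value on monomials
  have inner : ∀ (L : List (Fin n × Fin n)) (aa bb : Fin n), L ≠ [] →
      r ((L.map fun p => t p.1 p.2).prod) (t aa bb) =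
        if L.map Prod.snd = gch g f aa (L.map Prod.fst) ∧
            bb = fch f aa (L.map Prod.fst)
        then qpr q f aa (L.map Prod.fst) else 0 := by
    intro L
    induction L with
    | nil => intro aa bb h; exact absurd rfl h
    | cons p L ih =>
      intro aa bb _
      cases L with
      | nil =>
        simp only [List.map_cons, List.map_nil, List.prod_cons, List.prod_nil,
          mul_one, hrt, gch, fch, qpr]
        by_cases h1 : p.2 = g aa p.1 <;> by_cases h2 : bb = f p.1 aa <;>
          simp [h1, h2]
      | cons p' L' =>
        rw [List.map_cons, List.prod_cons, step,
          ih (f p.1 aa) bb (by simp)]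
        simp only [List.map_cons, gch, fch, qpr]
        by_cases h1 : p.2 = g aa p.1 <;>
          by_cases h2 : (p'.2 :: L'.map Prod.snd) =
            gch g f (f p.1 aa) (p'.1 :: L'.map Prod.fst) <;>
          by_cases h3 : bb = fch f (f p.1 aa) (p'.1 :: L'.map Prod.fst) <;>
          simp [h1, h2, h3]
  intro a b
  -- aseq in terms of fch
  have haseq : ∀ (aa : Fin n) (s : ℕ), s ≤ N →
      aseq aa s = fch f aa ((List.ofFn jseq).take s) := by
    intro aa s
    induction s with
    | zero => intro _; simp [ha0, fch]
    | succ s ihs =>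
      intro hs
      have hsN : s < N := hs
      rw [haS aa ⟨s, hsN⟩, ihs (le_of_lt hsN), List.take_succ]
      have : (List.ofFn jseq)[s]? = some (jseq ⟨s, hsN⟩) := by
        rw [List.getElem?_eq_getElem (by simpa using hsN)]
        simp
      rw [this]
      simp [fch_append, fch]
  have hlen : ((List.ofFn jseq).take N) = List.ofFn jseq := by
    apply List.take_of_length_le; simp
  have haN : aseq a N = fch f a (List.ofFn jseq) := by
    rw [haseq a N le_rfl, hlen]
  have hg : gch g f a (List.ofFn jseq) =
      List.ofFn (fun s : Fin N => g (aseq a s.1) (jseq s)) := by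
    rw [gch_ofFn]
    congr 1
    funext s
    rw [haseq a s.1 (le_of_lt s.2)]
  have hqp : qpr q f a (List.ofFn jseq) = ∏ s : Fin N, q (aseq a s.1) (jseq s) := by
    rw [qpr_ofFn]
    apply Finset.prod_congr rfl
    intro s _
    rw [haseq a s.1 (le_of_lt s.2)]
  -- expand D
  rw [hD, map_sum, LinearMap.sum_apply]
  have hterm : ∀ iseq : Fin N → Fin n,
      (r (α iseq • (List.ofFn fun s => t (jseq s) (iseq s)).prod)) (t a b) =
        α iseq * (if iseq = (fun s => g (aseq a s.1) (jseq s)) ∧ b = aseq a N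
          then ∏ s : Fin N, q (aseq a s.1) (jseq s) else 0) := by
    intro iseq
    rw [map_smul, LinearMap.smul_apply, smul_eq_mul]
    congr 1
    have hmap : (List.ofFn fun s => t (jseq s) (iseq s)) =
        (List.ofFn fun s => ((jseq s, iseq s) : Fin n × Fin n)).map
          (fun p => t p.1 p.2) := by
      rw [List.map_ofFn]; rfl
    have hne : (List.ofFn fun s => ((jseq s, iseq s) : Fin n × Fin n)) ≠ [] := by
      simp [List.ofFn_eq_nil_iff]; omega
    rw [hmap, inner _ a b hne]
    have h1 : (List.ofFn fun s => ((jseq s, iseq s) : Fin n × Fin n)).map Prod.fst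
        = List.ofFn jseq := by rw [List.map_ofFn]; rfl
    have h2 : (List.ofFn fun s => ((jseq s, iseq s) : Fin n × Fin n)).map Prod.snd
        = List.ofFn iseq := by rw [List.map_ofFn]; rfl
    rw [h1, h2, hg, hqp, haN]
    simp only [List.ofFn_inj]
  rw [Finset.sum_congr rfl (fun iseq _ => hterm iseq)]
  by_cases hb : b = aseq a N
  · simp [hb, mul_ite, Finset.sum_ite_eq', Finset.sum_ite_eq]
  · simp [hb]
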